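/- For all k ≥ 0 and all real φ, h_{2k+1}(sinh φ|q) = (-1)^k q^{-k(k+1)} (q³;q²)_k (2 sinh φ) D_k^{(q)}(q e^{2φ} + q e^{-2φ} | q), where D_n^{(q)} is the dual discrete q-ultraspherical polynomial sequence with s = q. -/

import Mathlib

open Finset Real

/-- Shifted q-factorial `(a;q)_n`. -/
noncomputable def qPoch (a q : ℝ) (n : ℕ) : ℝ := ∏ j ∈ Finset.range n, (1 - a * q ^ j)

/-- The `q⁻¹`-Hermite polynomials defined by their three-term recurrence. -/
noncomputable def qHermite (q : ℝ) : ℕ → ℝ → ℝ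
  | 0, _ => 1
  | 1, x => 2 * x
  | (n + 2), x => 2 * x * qHermite q (n + 1) x - (q ^ (n + 1))⁻¹ * (1 - q ^ (n + 1)) * qHermite q n x


lemma qHermite_rec (q x : ℝ) (n : ℕ) : qHermite q (n+2) x
    = 2 * x * qHermite q (n + 1) x - (q ^ (n + 1))⁻¹ * (1 - q ^ (n + 1)) * qHermite q n x := rfl

lemma qPoch_succ (a q : ℝ) (n : ℕ) : qPoch a q (n+1) = qPoch a q n * (1 - a * q ^ n) :=
  Finset.prod_range_succ _ _

/-- Connection between odd `q⁻¹`-Hermite polynomials and the dual discrete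
`q`-ultraspherical polynomials with `s = q`. -/
theorem stmt6 (q : ℝ) (hq0 : 0 < q) (hq1 : q < 1)
    (D : ℕ → ℝ → ℝ)
    (hD0 : ∀ y : ℝ, D 0 y = 1)
    (hDrec : ∀ (n : ℕ) (y : ℝ),
      y * D n y =
        -(q ^ (2 * n + 1))⁻¹ * (1 - q * q ^ (2 * n + 2)) * D (n + 1) y
          + (q ^ (2 * n + 1))⁻¹ * (1 + q) * D n y
          - (q ^ (2 * n))⁻¹ * (1 - q ^ (2 * n)) * D (n - 1) y) :
    ∀ (k : ℕ) (φ : ℝ),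
      qHermite q (2 * k + 1) (Real.sinh φ) =
        (-1) ^ k * (q ^ (k * (k + 1)))⁻¹ * qPoch (q ^ 3) (q ^ 2) k * (2 * Real.sinh φ) *
          D k (q * Real.exp (2 * φ) + q * Real.exp (-(2 * φ))) := by
  intro k φ
  have hq : q ≠ 0 := ne_of_gt hq0
  set x : ℝ := Real.sinh φ with hx
  set y : ℝ := q * Real.exp (2 * φ) + q * Real.exp (-(2 * φ)) with hyy
  have hy : y = 2 * q + 4 * q * x ^ 2 := by
    have h1 : Real.exp (2*φ) = Real.cosh (2*φ) + Real.sinh (2*φ) := (Real.cosh_add_sinh _).symm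
    have h2 : Real.exp (-(2*φ)) = Real.cosh (2*φ) - Real.sinh (2*φ) := by
      rw [Real.cosh_sub_sinh]
    have h3 : Real.cosh (2*φ) = Real.cosh φ ^ 2 + Real.sinh φ ^ 2 := Real.cosh_two_mul φ
    have h4 : Real.cosh φ ^ 2 - Real.sinh φ ^ 2 = 1 := Real.cosh_sq_sub_sinh_sq φ
    rw [hyy, h1, h2, h3]; nlinarith [h4]
  -- nonvanishing of 1 - q^(m+1)
  have hne : ∀ m : ℕ, (1 : ℝ) - q ^ (m+1) ≠ 0 := by
    intro m
    have : q ^ (m+1) < 1 := pow_lt_one₀ (le_of_lt hq0) hq1 (Nat.succ_ne_zero m)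
    linarith
  suffices H : ∀ n : ℕ,
      (qHermite q (2 * n + 1) x =
        (-1) ^ n * (q ^ (n * (n + 1)))⁻¹ * qPoch (q ^ 3) (q ^ 2) n * (2 * x) * D n y) ∧
      (qHermite q (2 * (n+1) + 1) x =
        (-1) ^ (n+1) * (q ^ ((n+1) * (n + 2)))⁻¹ * qPoch (q ^ 3) (q ^ 2) (n+1) * (2 * x) * D (n+1) y) by
    exact (H k).1
  intro n
  induction n with
  | zero =>
    constructor
    · simp [qHermite, qPoch, hD0]
    · -- k = 1
      have h1 := hDrec 0 y
      rw [hD0] at h1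
      simp only [pow_zero, mul_zero, mul_one] at h1
      -- h1 : y * 1 = -(q^1)⁻¹ * (1 - q*q^2) * D 1 y + (q^1)⁻¹*(1+q)*1 - 1⁻¹*(1-1)*D 0 y
      have hq3 : (1:ℝ) - q * q ^ 2 ≠ 0 := by
        have := hne 2; rw [show (2:ℕ)+1 = 3 from rfl] at this
        intro h; apply this; rw [← h]; ring
      have hD1 : D 1 y = ((1+q) - q * y) / (1 - q * q ^ 2) := by
        rw [eq_div_iff hq3]
        simp only [zero_add, pow_one, sub_self, mul_zero, sub_zero] at h1
        field_simp at h1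
        linarith [h1]
      show qHermite q 3 x = _
      rw [qHermite_rec q x 1, qHermite_rec q x 0]
      show 2*x*(2*x*(2*x) - (q^1)⁻¹*(1-q^1)*1) - (q^2)⁻¹*(1-q^2)*(2*x) = _
      rw [hD1, hy, qPoch_succ]
      simp only [qPoch, Finset.range_zero, Finset.prod_empty]
      have h3 : (1:ℝ) - q^3*(q^2)^0 ≠ 0 := by simpa using hne 2
      have h3' : (1:ℝ) - q^3 ≠ 0 := by simpa using hne 2
      field_simp
      ring
  | succ n ih =>
    obtain ⟨ihA, ihB⟩ := ih
    refine ⟨ihB, ?_⟩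
    rw [show 2 * (n + 1) + 1 = 2*n+3 by ring] at ihB
    have r1 := qHermite_rec q x (2*n+1)
    have r2 := qHermite_rec q x (2*n+2)
    have r3 := qHermite_rec q x (2*n+3)
    norm_num [Nat.add_assoc] at r1 r2 r3
    have r1c : q^(2*n+2) * qHermite q (2*n+3) x
        = 2*x*q^(2*n+2)*qHermite q (2*n+2) x - (1-q^(2*n+2))*qHermite q (2*n+1) x := by
      rw [r1]; field_simp
    have r2c : q^(2*n+3) * qHermite q (2*n+4) x
        = 2*x*q^(2*n+3)*qHermite q (2*n+3) x - (1-q^(2*n+3))*qHermite q (2*n+2) x := by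
      rw [r2]; field_simp
    have r3c : q^(2*n+4) * qHermite q (2*n+5) x
        = 2*x*q^(2*n+4)*qHermite q (2*n+4) x - (1-q^(2*n+4))*qHermite q (2*n+3) x := by
      rw [r3]; field_simp
    have hc : (q:ℝ)^(2*n+2)*q^(2*n+3)*q^(2*n+4) ≠ 0 := by positivity
    have hT : qHermite q (2*n+5) x =
        ( (4*x^2*q^(2*n+3)*q^(2*n+4) - (1-q^(2*n+3))*q^(2*n+4) - (1-q^(2*n+4))*q^(2*n+3))
            * q^(2*n+2) * qHermite q (2*n+3) x
          - (1-q^(2*n+3))*(1-q^(2*n+2)) * q^(2*n+4) * qHermite q (2*n+1) x )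
          / (q^(2*n+2)*q^(2*n+3)*q^(2*n+4)) := by
      rw [eq_div_iff hc]
      linear_combination q^(2*n+2)*q^(2*n+3) * r3c + 2*x*q^(2*n+2)*q^(2*n+4) * r2c
        + (1-q^(2*n+3))*q^(2*n+4) * r1c
    -- D recurrence at n+1, solved for D (n+2)
    have hr := hDrec (n+1) y
    rw [show (n+1) - 1 = n from rfl, show n+1+1 = n+2 from rfl] at hr
    have hden : (1:ℝ) - q * q ^ (2*(n+1)+2) ≠ 0 := by
      have := hne (2*n+4)
      intro h; apply this; rw [← h]; ring
    have hrc : q^(2*(n+1)+1) * (y * D (n+1) y)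
        = -(1 - q*q^(2*(n+1)+2)) * D (n+2) y + (1+q) * D (n+1) y
          - q*(1 - q^(2*(n+1))) * D n y := by
      rw [hr]; field_simp; ring
    have hD2 : D (n+2) y =
        ((1+q) * D (n+1) y - q*(1 - q^(2*(n+1))) * D n y
          - q^(2*(n+1)+1) * (y * D (n+1) y)) / (1 - q * q ^ (2*(n+1)+2)) := by
      rw [eq_div_iff hden]
      linear_combination hrc
    simp only [show n+1+1 = n+2 from rfl]
    rw [show 2 * (n + 2) + 1 = 2*n+5 by ring, hT, ihA, ihB, hD2,
      qPoch_succ (q^3) (q^2) (n+1), qPoch_succ (q^3) (q^2) n, hy]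
    have h5 : (1:ℝ) - q^3 * (q^2)^(n+1) ≠ 0 := by
      have := hne (2*n+4); intro h; apply this; rw [← h]; ring
    have h3 : (1:ℝ) - q^3 * (q^2)^n ≠ 0 := by
      have := hne (2*n+2); intro h; apply this; rw [← h]; ring
    field_simp
    ring
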